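/- Let R be a commutative ring with a filtration 𝓡, let M be an R-module and N an R-submodule of M. Provide the annihilator ideals (0:M), (0:N), and (0:M/N) of R with the filtrations induced by 𝓡, denoted (0:𝓜), (0:𝓝), (0:𝓜/𝓝). Then √(Gr(0:𝓜)) = √(Gr(0:𝓝)) ∩ √(Gr(0:𝓜/𝓝)) as ideals of the ring Gr𝓡. -/

import Mathlib

namespace FilteredPaper

variable {R : Type} [Ring R]

/-- `F` is a filtration of the ring `R`. -/
structure IsRingFiltration (F : ℤ → AddSubgroup R) : Prop where
  exhaustive : ∀ r : R, ∃ i, r ∈ F i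
  mono : ∀ i : ℤ, F (i - 1) ≤ F i
  mul_mem : ∀ {i j : ℤ} {r s : R}, r ∈ F i → s ∈ F j → r * s ∈ F (i + j)
  bot : ∀ i < 0, F i = ⊥
  one_mem : (1 : R) ∈ F 0

/-- `FM` is an `F`-filtration of the left `R`-module `M`. -/
structure IsModuleFiltration (F : ℤ → AddSubgroup R) {M : Type} [AddCommGroup M]
    [Module R M] (FM : ℤ → AddSubgroup M) : Prop where
  exhaustive : ∀ m : M, ∃ i, m ∈ FM i
  mono : ∀ i : ℤ, FM (i - 1) ≤ FM i
  smul_mem : ∀ {i j : ℤ} {r : R} {m : M}, r ∈ F i → m ∈ FM j → r • m ∈ FM (i + j)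

/-- A realization of the associated graded ring `Gr𝓡 = ⊕ᵢ Fᵢ/Fᵢ₋₁` of the filtered ring
`(R,F)` as a ring `A`: the map `emb i` sends `x ∈ Fᵢ` to its symbol
`σᵢ(x) = x + Fᵢ₋₁ ∈ Grᵢ𝓡 ⊆ A`; it is additive with kernel `Fᵢ₋₁`, the symbol maps are
multiplicative, and `A` is the internal direct sum of the images. -/
structure GrRingReal (F : ℤ → AddSubgroup R) (A : Type) [Ring A] where
  emb : ∀ i : ℤ, F i →+ A
  emb_eq_zero_iff : ∀ (i : ℤ) (x : F i), emb i x = 0 ↔ (x : R) ∈ F (i - 1)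
  emb_mul : ∀ (i j : ℤ) (x : F i) (y : F j) (h : (x : R) * (y : R) ∈ F (i + j)),
      emb i x * emb j y = emb (i + j) ⟨(x : R) * y, h⟩
  emb_one : ∀ h : (1 : R) ∈ F 0, emb 0 ⟨1, h⟩ = 1
  internal : DirectSum.IsInternal fun i : ℤ => (emb i).range

/-- A realization of the associated graded module `Gr𝓜 = ⊕ᵢ FMᵢ/FMᵢ₋₁` of a filtered
left `R`-module `(M,FM)` as a left module `G` over (a realization `A` of) `Gr𝓡`. -/
structure GrModuleReal (F : ℤ → AddSubgroup R) {M : Type} [AddCommGroup M] [Module R M]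
    (FM : ℤ → AddSubgroup M) {A : Type} [Ring A] (re : GrRingReal F A)
    (G : Type) [AddCommGroup G] [Module A G] where
  emb : ∀ i : ℤ, FM i →+ G
  emb_eq_zero_iff : ∀ (i : ℤ) (x : FM i), emb i x = 0 ↔ (x : M) ∈ FM (i - 1)
  emb_smul : ∀ (i j : ℤ) (r : F i) (m : FM j) (h : (r : R) • (m : M) ∈ FM (i + j)),
      re.emb i r • emb j m = emb (i + j) ⟨(r : R) • (m : M), h⟩
  internal : DirectSum.IsInternal fun i : ℤ => (emb i).range

/-- The ideal `Gr𝓢` of (the realization `A` of) `Gr𝓡` determined by a subset `S ⊆ R`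
carrying the induced filtration `Fᵢ ∩ S`: it is generated (indeed spanned) by the
symbols of the elements of `S`. -/
def grIdealOf {F : ℤ → AddSubgroup R} {A : Type} [Ring A] (re : GrRingReal F A)
    (S : Set R) : Ideal A :=
  Ideal.span {a : A | ∃ (i : ℤ) (x : F i), (x : R) ∈ S ∧ re.emb i x = a}

/-- The induced filtration on the quotient module `M ⧸ N`. -/
def quotFil {M : Type} [AddCommGroup M] [Module R M] (FM : ℤ → AddSubgroup M)
    (N : Submodule R M) : ℤ → AddSubgroup (M ⧸ N) :=
  fun i => (FM i).map N.mkQ.toAddMonoidHom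

/-- `FM` is a good `F`-filtration of the left `R`-module `M`:
`FMᵢ = Σⱼ F_{i-pⱼ} · gⱼ` for finitely many `gⱼ ∈ M`, `pⱼ ∈ ℤ`. -/
def IsGoodFiltration (F : ℤ → AddSubgroup R) {M : Type} [AddCommGroup M] [Module R M]
    (FM : ℤ → AddSubgroup M) : Prop :=
  IsModuleFiltration F FM ∧
  ∃ (t : ℕ) (g : Fin t → M) (p : Fin t → ℤ), ∀ i : ℤ,
    FM i = ⨆ j : Fin t, (F (i - p j)).map ((smulAddHom R M).flip (g j))

/-- The filtration induced by `FM` on a submodule `N ≤ M` is good (with the generators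
`gⱼ` lying in `N`, the equality being read inside `M`). -/
def InducedGoodOn (F : ℤ → AddSubgroup R) {M : Type} [AddCommGroup M] [Module R M]
    (FM : ℤ → AddSubgroup M) (N : Submodule R M) : Prop :=
  ∃ (t : ℕ) (g : Fin t → M) (p : Fin t → ℤ), (∀ j, g j ∈ N) ∧
    ∀ i : ℤ, FM i ⊓ N.toAddSubgroup =
      ⨆ j : Fin t, (F (i - p j)).map ((smulAddHom R M).flip (g j))

end FilteredPaper

open FilteredPaper in
/-- for a filtered commutative ring `(R,𝓡)`, a module `M` and a submodule
`N ≤ M`, with the annihilators carrying the induced filtrations,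
`√(Gr(0:𝓜)) = √(Gr(0:𝓝)) ∩ √(Gr(0:𝓜/𝓝))` as ideals of `Gr𝓡` (given by any
realization `A`). -/
theorem statement_8 (R : Type) [CommRing R] (F : ℤ → AddSubgroup R)
    (hF : IsRingFiltration F)
    (M : Type) [AddCommGroup M] [Module R M] (N : Submodule R M)
    (A : Type) [CommRing A] (re : GrRingReal F A) :
    (grIdealOf re (Module.annihilator R M : Set R)).radical =
      (grIdealOf re (Module.annihilator R ↥N : Set R)).radical ⊓
        (grIdealOf re (Module.annihilator R (M ⧸ N) : Set R)).radical := by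
  -- auxiliary facts
  have hmono : ∀ S T : Set R, S ⊆ T → grIdealOf re S ≤ grIdealOf re T := by
    intro S T hST
    apply Ideal.span_mono
    rintro a ⟨i, x, hx, rfl⟩
    exact ⟨i, x, hST hx, rfl⟩
  have hMN : (Module.annihilator R M : Set R) ⊆ (Module.annihilator R ↥N : Set R) := by
    intro r hr
    rw [SetLike.mem_coe, Module.mem_annihilator] at hr ⊢
    intro n
    ext
    simpa using hr (n : M)
  have hMQ : (Module.annihilator R M : Set R) ⊆ (Module.annihilator R (M ⧸ N) : Set R) := by
    intro r hr
    rw [SetLike.mem_coe, Module.mem_annihilator] at hr ⊢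
    intro q
    obtain ⟨m, rfl⟩ := Submodule.Quotient.mk_surjective N q
    rw [← Submodule.Quotient.mk_smul, hr m, Submodule.Quotient.mk_zero]
  have hmul : grIdealOf re (Module.annihilator R ↥N : Set R) *
      grIdealOf re (Module.annihilator R (M ⧸ N) : Set R) ≤
      grIdealOf re (Module.annihilator R M : Set R) := by
    rw [grIdealOf, grIdealOf, Ideal.span_mul_span]
    rw [Ideal.span_le]
    intro a ha
    simp only [Set.mem_mul] at ha
    obtain ⟨s, hs, t, ht, rfl⟩ := ha
    obtain ⟨i, x, hx, rfl⟩ := hs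
    obtain ⟨j, y, hy, rfl⟩ := ht
    have hxy : (x : R) * (y : R) ∈ F (i + j) := hF.mul_mem x.2 y.2
    rw [re.emb_mul i j x y hxy]
    apply Ideal.subset_span
    refine ⟨i + j, ⟨_, hxy⟩, ?_, rfl⟩
    rw [SetLike.mem_coe, Module.mem_annihilator] at hx hy ⊢
    intro m
    have hyN : (y : R) • m ∈ N := by
      have := hy (Submodule.Quotient.mk m)
      rwa [← Submodule.Quotient.mk_smul, Submodule.Quotient.mk_eq_zero] at this
    have := hx ⟨(y : R) • m, hyN⟩
    rw [mul_smul]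
    simpa [Subtype.ext_iff] using this
  apply le_antisymm
  · exact le_inf (Ideal.radical_mono (hmono _ _ hMN)) (Ideal.radical_mono (hmono _ _ hMQ))
  · rw [← Ideal.radical_mul]
    exact Ideal.radical_mono hmul
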